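/- Suppose λ_i = 1/m for every i ∈ I and let Q_1,…,Q_m : X → X be nonexpansive. Then for each k ∈ I, the map J_k ∘ R_k is Lipschitz continuous with constant √(m/(m−1)), and consequently the composition T = (J_m ∘ R_m) ∘ ⋯ ∘ (J_1 ∘ R_1) is Lipschitz continuous with constant (m/(m−1))^{m/2}. -/

import Mathlib

/-- With equal weights `1/m` and nonexpansive `Q₁, …, Q_m`, each
`J_k ∘ R_k` is Lipschitz with constant `√(m/(m−1))`, and the composition
`T = (J_m ∘ R_m) ∘ ⋯ ∘ (J_1 ∘ R_1)` is Lipschitz with constant `(m/(m−1))^{m/2}`. -/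
theorem JkRk_lipschitz_and_composition_lipschitz
    {X : Type*} [NormedAddCommGroup X] [InnerProductSpace ℝ X]
    (m : ℕ) (hm : 2 ≤ m)
    (Q : Fin m → X → X)
    (hQ : ∀ i x y, ‖Q i x - Q i y‖ ≤ ‖x - y‖)
    (JR : Fin m → PiLp 2 (fun _ : Fin m => X) → PiLp 2 (fun _ : Fin m => X))
    (hJR : ∀ k x i, JR k x i =
      if i = k then Q k (((m : ℝ) - 1)⁻¹ • ∑ j ∈ Finset.univ.erase k, x j) else x i) :
    (∀ k x y, ‖JR k x - JR k y‖ ≤ Real.sqrt ((m : ℝ) / ((m : ℝ) - 1)) * ‖x - y‖) ∧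
      (∀ x y,
        ‖List.foldl (fun z k => JR k z) x (List.finRange m)
            - List.foldl (fun z k => JR k z) y (List.finRange m)‖
          ≤ ((m : ℝ) / ((m : ℝ) - 1)) ^ ((m : ℝ) / 2) * ‖x - y‖) := by
  have hm2 : (2:ℝ) ≤ (m:ℝ) := by exact_mod_cast hm
  have hm1 : (0:ℝ) < (m:ℝ) - 1 := by linarith
  set c : ℝ := (m:ℝ) / ((m:ℝ) - 1) with hc
  have hc0 : 0 ≤ c := by positivity
  have key : ∀ k x y, ‖JR k x - JR k y‖ ≤ Real.sqrt c * ‖x - y‖ := by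
    intro k x y
    have hsq : ‖JR k x - JR k y‖^2 ≤ c * ‖x - y‖^2 := by
      rw [PiLp.norm_sq_eq_of_L2, PiLp.norm_sq_eq_of_L2]
      have hdi : ∀ i, (JR k x - JR k y) i = JR k x i - JR k y i := fun i => rfl
      have hsub : ∀ i : Fin m, (x - y : PiLp 2 fun _ : Fin m => X) i = x i - y i :=
        fun i => rfl
      set S : ℝ := ∑ j ∈ Finset.univ.erase k, ‖x j - y j‖^2 with hS
      set F : ℝ := ∑ i, ‖x i - y i‖^2 with hF
      have hSF : S ≤ F := by
        rw [hS, hF, ← Finset.sum_erase_add Finset.univ _ (Finset.mem_univ k)]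
        have : (0:ℝ) ≤ ‖x k - y k‖^2 := by positivity
        linarith
      -- bound the k-th coordinate
      have hdk : ‖(JR k x - JR k y) k‖^2 ≤ ((m:ℝ) - 1)⁻¹ * S := by
        have h1 : ‖(JR k x - JR k y) k‖ ≤
            ((m:ℝ) - 1)⁻¹ * ‖∑ j ∈ Finset.univ.erase k, (x j - y j)‖ := by
          rw [hdi, hJR, hJR, if_pos rfl, if_pos rfl]
          calc ‖Q k (((m : ℝ) - 1)⁻¹ • ∑ j ∈ Finset.univ.erase k, x j)
                - Q k (((m : ℝ) - 1)⁻¹ • ∑ j ∈ Finset.univ.erase k, y j)‖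
              ≤ ‖(((m : ℝ) - 1)⁻¹ • ∑ j ∈ Finset.univ.erase k, x j)
                - (((m : ℝ) - 1)⁻¹ • ∑ j ∈ Finset.univ.erase k, y j)‖ := hQ _ _ _
            _ = ((m:ℝ) - 1)⁻¹ * ‖∑ j ∈ Finset.univ.erase k, (x j - y j)‖ := by
                rw [← smul_sub, ← Finset.sum_sub_distrib, norm_smul]
                rw [Real.norm_eq_abs, abs_of_nonneg (le_of_lt (inv_pos.mpr hm1))]
        have h2 : ‖∑ j ∈ Finset.univ.erase k, (x j - y j)‖^2 ≤ ((m:ℝ) - 1) * S := by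
          have h3 : ‖∑ j ∈ Finset.univ.erase k, (x j - y j)‖
              ≤ ∑ j ∈ Finset.univ.erase k, ‖x j - y j‖ := norm_sum_le _ _
          have h4 : (∑ j ∈ Finset.univ.erase k, ‖x j - y j‖)^2 ≤ ((m:ℝ) - 1) * S := by
            have := sq_sum_le_card_mul_sum_sq (s := Finset.univ.erase k)
              (f := fun j => ‖x j - y j‖)
            have hcard : ((Finset.univ.erase k).card : ℝ) = (m:ℝ) - 1 := by
              rw [Finset.card_erase_of_mem (Finset.mem_univ k)]
              simp only [Finset.card_univ, Fintype.card_fin]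
              have : 1 ≤ m := by omega
              push_cast [Nat.cast_sub this]
              ring
            rw [hcard] at this
            exact this
          calc ‖∑ j ∈ Finset.univ.erase k, (x j - y j)‖^2
              ≤ (∑ j ∈ Finset.univ.erase k, ‖x j - y j‖)^2 := by
                apply pow_le_pow_left₀ (norm_nonneg _) h3
            _ ≤ ((m:ℝ) - 1) * S := h4
        calc ‖(JR k x - JR k y) k‖^2
            ≤ (((m:ℝ) - 1)⁻¹ * ‖∑ j ∈ Finset.univ.erase k, (x j - y j)‖)^2 := by
              apply pow_le_pow_left₀ (norm_nonneg _) h1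
          _ = (((m:ℝ) - 1)⁻¹)^2 * ‖∑ j ∈ Finset.univ.erase k, (x j - y j)‖^2 := by ring
          _ ≤ (((m:ℝ) - 1)⁻¹)^2 * (((m:ℝ) - 1) * S) := by
              apply mul_le_mul_of_nonneg_left h2 (by positivity)
          _ = ((m:ℝ) - 1)⁻¹ * S := by field_simp
      have hsplit : ∑ i, ‖(JR k x - JR k y) i‖^2
          = S + ‖(JR k x - JR k y) k‖^2 := by
        rw [← Finset.sum_erase_add Finset.univ _ (Finset.mem_univ k)]
        congr 1
        apply Finset.sum_congr rfl
        intro i hi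
        have hik : i ≠ k := Finset.ne_of_mem_erase hi
        rw [hdi, hJR, hJR, if_neg hik, if_neg hik]
      have hcF : c * F = F + ((m:ℝ) - 1)⁻¹ * F := by
        rw [hc]; field_simp; ring
      have hFsum : (∑ i, ‖(x - y : PiLp 2 fun _ : Fin m => X) i‖^2) = F := by
        apply Finset.sum_congr rfl; intro i _; rw [hsub]
      rw [hFsum, hsplit, hcF]
      have hinv : ((m:ℝ) - 1)⁻¹ * S ≤ ((m:ℝ) - 1)⁻¹ * F :=
        mul_le_mul_of_nonneg_left hSF (le_of_lt (inv_pos.mpr hm1))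
      linarith
    calc ‖JR k x - JR k y‖ = Real.sqrt (‖JR k x - JR k y‖^2) :=
          (Real.sqrt_sq (norm_nonneg _)).symm
      _ ≤ Real.sqrt (c * ‖x - y‖^2) := Real.sqrt_le_sqrt hsq
      _ = Real.sqrt c * ‖x - y‖ := by
          rw [Real.sqrt_mul hc0, Real.sqrt_sq (norm_nonneg _)]
  refine ⟨key, ?_⟩
  have fold : ∀ (L : List (Fin m)) (x y : PiLp 2 fun _ : Fin m => X),
      ‖L.foldl (fun z k => JR k z) x - L.foldl (fun z k => JR k z) y‖
        ≤ (Real.sqrt c)^L.length * ‖x - y‖ := by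
    intro L
    induction L with
    | nil => intro x y; simp
    | cons a L ih =>
      intro x y
      simp only [List.foldl_cons, List.length_cons]
      calc ‖L.foldl (fun z k => JR k z) (JR a x) - L.foldl (fun z k => JR k z) (JR a y)‖
          ≤ (Real.sqrt c)^L.length * ‖JR a x - JR a y‖ := ih _ _
        _ ≤ (Real.sqrt c)^L.length * (Real.sqrt c * ‖x - y‖) :=
            mul_le_mul_of_nonneg_left (key a x y) (by positivity)
        _ = (Real.sqrt c)^(L.length+1) * ‖x - y‖ := by ring
  intro x y
  have := fold (List.finRange m) x y
  rw [List.length_finRange] at this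
  have hpow : (Real.sqrt c)^m = c ^ ((m:ℝ)/2) := by
    rw [Real.sqrt_eq_rpow, ← Real.rpow_natCast (c ^ ((1:ℝ)/2)) m, ← Real.rpow_mul hc0]
    ring_nf
  rwa [hpow] at this
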